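/- For Re(c) > Re(b) > 0, 0 ≤ y < 1 and |x| < 1, the n-th derivative formula holds: (d^n/dx^n) ₂F₁(a,[b,c;y];x) = ((a)_n (b)_n / (c)_n) · ₂F₁(a+n,[b+n,c+n;y];x). -/

import Mathlib

open Complex

/-- Incomplete beta function `B_y(x,z) = ∫_0^y t^(x-1) (1-t)^(z-1) dt`. -/
noncomputable def incBeta (y : ℝ) (x z : ℂ) : ℂ :=
  ∫ t in (0:ℝ)..y, (t:ℂ)^(x-1) * (1 - (t:ℂ))^(z-1)

/-- Pochhammer symbol `(a)_n`. -/
noncomputable def poch (a : ℂ) (n : ℕ) : ℂ := ∏ i ∈ Finset.range n, (a + i)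

/-- Incomplete Pochhammer ratio `[b,c;y]_n`. -/
noncomputable def ipochL (b c : ℂ) (y : ℝ) (n : ℕ) : ℂ :=
  incBeta y (b + n) (c - b) / Complex.betaIntegral b (c - b)

/-- Incomplete Pochhammer ratio `{b,c;y}_n`. -/
noncomputable def ipochU (b c : ℂ) (y : ℝ) (n : ℕ) : ℂ :=
  incBeta (1 - y) (c - b) (b + n) / Complex.betaIntegral b (c - b)

/-- Gauss hypergeometric series `₂F₁(a,b;c;x)`. -/
noncomputable def hyp2F1 (a b c x : ℂ) : ℂ :=
  ∑' n : ℕ, poch a n * poch b n / poch c n * x^n / (n.factorial : ℂ)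

/-- Incomplete Gauss hypergeometric function `₂F₁(a,[b,c;y];x)`. -/
noncomputable def inc2F1L (a b c : ℂ) (y : ℝ) (x : ℂ) : ℂ :=
  ∑' n : ℕ, poch a n * ipochL b c y n * x^n / (n.factorial : ℂ)

/-- Incomplete Gauss hypergeometric function `₂F₁(a,{b,c;y};x)`. -/
noncomputable def inc2F1U (a b c : ℂ) (y : ℝ) (x : ℂ) : ℂ :=
  ∑' n : ℕ, poch a n * ipochU b c y n * x^n / (n.factorial : ℂ)

/-- Incomplete confluent hypergeometric function `₁F₁([a,b;y];x)`. -/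
noncomputable def inc1F1L (a b : ℂ) (y : ℝ) (x : ℂ) : ℂ :=
  ∑' n : ℕ, ipochL a b y n * x^n / (n.factorial : ℂ)

/-- Incomplete confluent hypergeometric function `₁F₁({a,b;y};x)`. -/
noncomputable def inc1F1U (a b : ℂ) (y : ℝ) (x : ℂ) : ℂ :=
  ∑' n : ℕ, ipochU a b y n * x^n / (n.factorial : ℂ)

/-- Incomplete Appell function `F₁[a,b,c;d;x,z;y]`. -/
noncomputable def incAppellF1 (a b c d x z : ℂ) (y : ℝ) : ℂ :=
  ∑' p : ℕ × ℕ, ipochL a d y (p.1 + p.2) * poch b p.1 * poch c p.2 *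
    x^p.1 * z^p.2 / ((p.1.factorial : ℂ) * (p.2.factorial : ℂ))

/-- Incomplete Riemann–Liouville fractional derivative `D_z^μ[f(z);y]`. -/
noncomputable def incRL (μ : ℂ) (f : ℂ → ℂ) (y : ℝ) (z : ℂ) : ℂ :=
  z^(-μ) / Complex.Gamma (-μ) * ∫ u in (0:ℝ)..y, f ((u:ℂ) * z) * (1 - (u:ℂ))^(-μ-1)


lemma poch_zero (a : ℂ) : poch a 0 = 1 := by simp [poch]

lemma poch_succ' (a : ℂ) (k : ℕ) : poch a (k + 1) = a * poch (a + 1) k := by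
  rw [poch, Finset.prod_range_succ']
  simp only [Nat.cast_zero, add_zero]
  rw [mul_comm, poch]
  congr 1
  refine Finset.prod_congr rfl fun i _ => ?_
  push_cast; ring

lemma poch_ne_zero {c : ℂ} (hc : 0 < c.re) (n : ℕ) : poch c n ≠ 0 := by
  refine Finset.prod_ne_zero_iff.mpr fun i _ => ?_
  intro h
  have : (c + i).re = 0 := by rw [h]; simp
  simp only [add_re, natCast_re] at this
  have : (0:ℝ) ≤ (i:ℝ) := Nat.cast_nonneg i
  linarith [Complex.add_re c i, (by simpa using congrArg Complex.re (h)), hc]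

lemma beta_ne_zero {b c : ℂ} (hb : 0 < b.re) (hbc : b.re < c.re) :
    Complex.betaIntegral b (c - b) ≠ 0 := by
  have hcb : 0 < (c - b).re := by simp [sub_re]; linarith
  have h1 := Complex.Gamma_mul_Gamma_eq_betaIntegral hb hcb
  have hc : 0 < c.re := lt_trans hb hbc
  have e : b + (c - b) = c := by ring
  rw [e] at h1
  intro h
  rw [h, mul_zero] at h1
  exact (mul_ne_zero (Complex.Gamma_ne_zero_of_re_pos hb)
    (Complex.Gamma_ne_zero_of_re_pos hcb)) h1

lemma beta_shift {b c : ℂ} (hb : 0 < b.re) (hbc : b.re < c.re) :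
    Complex.betaIntegral (b + 1) (c - b) = b / c * Complex.betaIntegral b (c - b) := by
  have hcb : 0 < (c - b).re := by simp [sub_re]; linarith
  have hc : 0 < c.re := lt_trans hb hbc
  have hb1 : 0 < (b + 1).re := by simp [add_re]; linarith
  have h1 := Complex.Gamma_mul_Gamma_eq_betaIntegral hb hcb
  have h2 := Complex.Gamma_mul_Gamma_eq_betaIntegral hb1 hcb
  have e1 : b + (c - b) = c := by ring
  have e2 : b + 1 + (c - b) = c + 1 := by ring
  rw [e1] at h1; rw [e2] at h2
  have hbne : b ≠ 0 := fun h => by simp [h] at hb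
  have hcne : c ≠ 0 := fun h => by simp [h] at hc
  rw [Complex.Gamma_add_one b hbne, Complex.Gamma_add_one c hcne] at h2
  have hGc : Complex.Gamma c ≠ 0 := Complex.Gamma_ne_zero_of_re_pos hc
  rw [div_mul_eq_mul_div, eq_div_iff hcne]
  apply mul_left_cancel₀ hGc
  linear_combination b * h1 - h2

lemma ipochL_shift {b c : ℂ} (hb : 0 < b.re) (hbc : b.re < c.re) (y : ℝ) (k : ℕ) :
    ipochL b c y (k + 1) = b / c * ipochL (b + 1) (c + 1) y k := by
  have e1 : (c + 1) - (b + 1) = c - b := by ring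
  have e2 : b + ((k : ℕ) + 1 : ℕ) = (b + 1) + (k : ℂ) := by push_cast; ring
  rw [ipochL, ipochL, e1, e2, beta_shift hb hbc]
  have hc : 0 < c.re := lt_trans hb hbc
  have hbne : b ≠ 0 := fun h => by simp [h] at hb
  have hcne : c ≠ 0 := fun h => by simp [h] at hc
  have hB : Complex.betaIntegral b (c - b) ≠ 0 := beta_ne_zero hb hbc
  field_simp

open MeasureTheory intervalIntegral in
lemma incBeta_bound {b c : ℂ} (hb : 0 < b.re) (hbc : b.re < c.re) {y : ℝ}
    (hy0 : 0 ≤ y) (hy1 : y < 1) :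
    ∃ M : ℝ, 0 ≤ M ∧ ∀ k : ℕ, ‖incBeta y (b + k) (c - b)‖ ≤ M := by
  have hcb : 0 < (c - b).re := by simp [sub_re]; linarith
  set F : ℕ → ℝ → ℂ := fun k t => (t:ℂ) ^ (b + k - 1) * (1 - (t:ℂ)) ^ (c - b - 1) with hF
  have hint : ∀ k : ℕ, IntervalIntegrable (F k) volume 0 1 := by
    intro k
    have : 0 < (b + k).re := by simp [add_re]; positivity
    simpa [hF] using Complex.betaIntegral_convergent this hcb
  have hinty : ∀ k : ℕ, IntervalIntegrable (F k) volume 0 y := by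
    intro k
    refine (hint k).mono_set ?_
    rw [Set.uIcc_of_le hy0, Set.uIcc_of_le zero_le_one]
    exact Set.Icc_subset_Icc le_rfl hy1.le
  refine ⟨∫ t in (0:ℝ)..1, ‖F 0 t‖,
    intervalIntegral.integral_nonneg zero_le_one (fun t _ => norm_nonneg _), fun k => ?_⟩
  have step1 : ‖incBeta y (b + k) (c - b)‖ ≤ ∫ t in (0:ℝ)..y, ‖F k t‖ := by
    rw [incBeta]
    exact intervalIntegral.norm_integral_le_integral_norm hy0
  have step2 : (∫ t in (0:ℝ)..y, ‖F k t‖) ≤ ∫ t in (0:ℝ)..y, ‖F 0 t‖ := by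
    refine intervalIntegral.integral_mono_ae_restrict hy0 (hinty k).norm (hinty 0).norm ?_
    have hne : ∀ᵐ t : ℝ ∂(volume.restrict (Set.Icc 0 y)), t ≠ 0 := by
      rw [ae_iff]
      refine measure_mono_null (fun t ht => ?_) (show (volume.restrict (Set.Icc 0 y)) {0} = 0 from
        le_antisymm ((Measure.restrict_le_self _).trans_eq (by simp)) zero_le)
      simpa using ht
    have hmem : ∀ᵐ t : ℝ ∂(volume.restrict (Set.Icc 0 y)), t ∈ Set.Icc 0 y :=
      ae_restrict_mem measurableSet_Icc
    filter_upwards [hne, hmem] with t ht0 htm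
    have ht : 0 < t := lt_of_le_of_ne htm.1 (Ne.symm ht0)
    have ht1 : t < 1 := lt_of_le_of_lt htm.2 hy1
    have hnorm : ∀ j : ℕ, ‖F j t‖ = t ^ (b.re + j - 1) * (1 - t) ^ (c.re - b.re - 1) := by
      intro j
      have h1t : (0:ℝ) < 1 - t := by linarith
      have e3 : (1 : ℂ) - (t:ℂ) = ((1 - t : ℝ) : ℂ) := by push_cast; ring
      rw [hF]
      simp only [norm_mul, e3]
      rw [Complex.norm_cpow_eq_rpow_re_of_pos ht, Complex.norm_cpow_eq_rpow_re_of_pos h1t]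
      congr 2 <;> simp [sub_re, add_re]
    rw [hnorm k, hnorm 0]
    refine mul_le_mul_of_nonneg_right ?_ (Real.rpow_nonneg (by linarith) _)
    refine Real.rpow_le_rpow_of_exponent_ge ht ht1.le ?_
    simp only [Nat.cast_zero]
    have : (0:ℝ) ≤ (k:ℝ) := Nat.cast_nonneg k
    linarith
  have step3 : (∫ t in (0:ℝ)..y, ‖F 0 t‖) ≤ ∫ t in (0:ℝ)..1, ‖F 0 t‖ := by
    rw [integral_of_le hy0, integral_of_le zero_le_one]
    refine setIntegral_mono_set (hint 0).norm.1 ?_ ?_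
    · exact Filter.Eventually.of_forall fun t => norm_nonneg _
    · exact HasSubset.Subset.eventuallyLE (Set.Ioc_subset_Ioc_right hy1.le)
  calc ‖incBeta y (b + k) (c - b)‖ ≤ _ := step1
    _ ≤ _ := step2
    _ ≤ _ := step3

open Filter in
lemma summable_W (a : ℂ) {r : ℝ} (hr0 : 0 < r) (hr1 : r < 1) :
    ∃ W : ℕ → ℝ, (Summable W) ∧ (∀ k, 0 < W k) ∧
      (∀ k, ‖poch a k‖ * ((k:ℝ) + 1) * r ^ k / (k.factorial : ℝ) ≤ W k) := by
  set c : ℝ := ‖a‖ + 1 with hc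
  have hc1 : 1 ≤ c := by rw [hc]; linarith [norm_nonneg a]
  set P : ℕ → ℝ := fun k => ∏ i ∈ Finset.range k, (c + i) with hP
  have hPpos : ∀ k, 0 < P k := fun k => Finset.prod_pos fun i _ => by positivity
  set W : ℕ → ℝ := fun k => P k * ((k:ℝ) + 1) * r ^ k / (k.factorial : ℝ) with hW
  have hWpos : ∀ k, 0 < W k := by
    intro k
    exact div_pos (mul_pos (mul_pos (hPpos k) (by positivity)) (pow_pos hr0 k))
      (by positivity)
  refine ⟨W, ?_, hWpos, ?_⟩
  · -- ratio test
    have hratio : ∀ k : ℕ, ‖W (k+1)‖ / ‖W k‖ =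
        ((c + k) / ((k:ℝ)+1)) * (((k:ℝ)+2) / ((k:ℝ)+1)) * r := by
      intro k
      rw [Real.norm_eq_abs, Real.norm_eq_abs, abs_of_pos (hWpos _), abs_of_pos (hWpos _)]
      have hPk : P (k+1) = P k * (c + k) := Finset.prod_range_succ _ _
      have hfk : ((k+1).factorial : ℝ) = ((k:ℝ)+1) * (k.factorial : ℝ) := by
        rw [Nat.factorial_succ]; push_cast; ring
      rw [hW]
      simp only [hPk, hfk]
      have h1 : ((k:ℝ)+1) ≠ 0 := by positivity
      have h2 : (k.factorial : ℝ) ≠ 0 := by positivity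
      have h3 : P k ≠ 0 := (hPpos k).ne'
      have h4 : r ≠ 0 := hr0.ne'
      field_simp
      push_cast
      ring
    have htend : Tendsto (fun k : ℕ => ‖W (k+1)‖ / ‖W k‖) atTop (nhds r) := by
      simp only [hratio]
      have hA : ∀ d : ℝ, Tendsto (fun k : ℕ => (d + (k:ℝ)) / ((k:ℝ)+1)) atTop (nhds 1) := by
        intro d
        have h0 : Tendsto (fun k : ℕ => (d - 1) / ((k:ℝ)+1)) atTop (nhds 0) := by
          apply Tendsto.div_atTop (tendsto_const_nhds)
          exact tendsto_atTop_add_const_right _ 1 tendsto_natCast_atTop_atTop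
        have := h0.add (tendsto_const_nhds (x := (1:ℝ)))
        rw [zero_add] at this
        refine this.congr fun k => ?_
        have h1 : ((k:ℝ)+1) ≠ 0 := by positivity
        field_simp
        try ring
      have hB : Tendsto (fun k : ℕ => ((k:ℝ)+2) / ((k:ℝ)+1)) atTop (nhds 1) :=
        (hA 2).congr fun k => by rw [add_comm 2 ((k:ℝ))]
      have := ((hA c).mul hB).mul_const r
      rw [one_mul, one_mul] at this
      exact this
    exact summable_of_ratio_test_tendsto_lt_one hr1
      (Filter.Eventually.of_forall fun k => (hWpos k).ne') htend
  · intro k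
    have hpoch : ‖poch a k‖ ≤ P k := by
      rw [poch, hP]
      calc ‖∏ i ∈ Finset.range k, (a + (i:ℂ))‖ = ∏ i ∈ Finset.range k, ‖a + (i:ℂ)‖ :=
            norm_prod _ _
        _ ≤ ∏ i ∈ Finset.range k, (c + i) := by
            refine Finset.prod_le_prod (fun i _ => norm_nonneg _) (fun i _ => ?_)
            calc ‖a + (i:ℂ)‖ ≤ ‖a‖ + ‖(i:ℂ)‖ := norm_add_le _ _
              _ ≤ c + i := by rw [Complex.norm_natCast]; rw [hc]; linarith
    simp only [hW]
    gcongr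

open Filter Metric in
lemma inc2F1L_hasDerivAt (a : ℂ) {b c : ℂ} (hb : 0 < b.re) (hbc : b.re < c.re) {y : ℝ}
    (hy0 : 0 ≤ y) (hy1 : y < 1) {w : ℂ} (hw : ‖w‖ < 1) :
    HasDerivAt (fun z : ℂ => inc2F1L a b c y z)
      (a * b / c * inc2F1L (a + 1) (b + 1) (c + 1) y w) w := by
  obtain ⟨M, hM0, hM⟩ := incBeta_bound hb hbc hy0 hy1
  set r : ℝ := (‖w‖ + 1) / 2 with hr
  have hr0 : 0 < r := by rw [hr]; positivity
  have hr1 : r < 1 := by rw [hr]; linarith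
  have hwr : ‖w‖ < r := by rw [hr]; linarith
  obtain ⟨W, hWsum, hWpos, hWle⟩ := summable_W a hr0 hr1
  have hBne : Complex.betaIntegral b (c - b) ≠ 0 := beta_ne_zero hb hbc
  -- bound on ipochL
  set M' : ℝ := M / ‖Complex.betaIntegral b (c - b)‖ with hM'
  have hM'0 : 0 ≤ M' := div_nonneg hM0 (norm_nonneg _)
  have hL : ∀ k : ℕ, ‖ipochL b c y k‖ ≤ M' := by
    intro k
    rw [ipochL, norm_div, hM']
    gcongr
    exact hM k
  set g : ℕ → ℂ → ℂ := fun k z => poch a k * ipochL b c y k * z ^ k / (k.factorial : ℂ)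
    with hg
  set g' : ℕ → ℂ → ℂ := fun k z =>
    poch a k * ipochL b c y k * ((k : ℂ) * z ^ (k - 1)) / (k.factorial : ℂ) with hg'
  have hgd : ∀ (k : ℕ) (z : ℂ), HasDerivAt (g k) (g' k z) z := by
    intro k z
    simpa [hg, hg'] using
      (((hasDerivAt_pow k z).const_mul (poch a k * ipochL b c y k)).div_const
        ((k.factorial : ℂ)))
  have hbound : ∀ (k : ℕ) (z : ℂ), z ∈ ball (0:ℂ) r → ‖g' k z‖ ≤ (M' / r) * W k := by
    intro k z hz
    rw [mem_ball_zero_iff] at hz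
    have h1 : ‖g' k z‖ = ‖poch a k‖ * ‖ipochL b c y k‖ * ((k:ℝ) * ‖z‖ ^ (k - 1)) /
        (k.factorial : ℝ) := by
      simp [hg', norm_mul, norm_div, norm_pow, Complex.norm_natCast]
    rw [h1]
    have h2 : ‖z‖ ^ (k - 1) ≤ r ^ (k - 1) :=
      pow_le_pow_left₀ (norm_nonneg z) hz.le _
    have h3 : (k:ℝ) * r ^ (k - 1) ≤ ((k:ℝ) + 1) * r ^ k / r := by
      cases k with
      | zero => simp; positivity
      | succ m =>
        have e0 : (m + 1 : ℕ) - 1 = m := rfl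
        rw [e0, le_div_iff₀ hr0]
        push_cast
        rw [pow_succ]
        nlinarith [pow_pos hr0 m, hr0]
    calc ‖poch a k‖ * ‖ipochL b c y k‖ * ((k:ℝ) * ‖z‖ ^ (k - 1)) / (k.factorial : ℝ)
        ≤ ‖poch a k‖ * M' * (((k:ℝ) + 1) * r ^ k / r) / (k.factorial : ℝ) := by
          gcongr
          · exact hL k
          · exact (mul_le_mul_of_nonneg_left h2 (Nat.cast_nonneg k)).trans h3
      _ = (M' / r) * (‖poch a k‖ * ((k:ℝ) + 1) * r ^ k / (k.factorial : ℝ)) := by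
          field_simp
      _ ≤ (M' / r) * W k := by
          have := hWle k
          have h4 : 0 ≤ M' / r := div_nonneg hM'0 hr0.le
          exact mul_le_mul_of_nonneg_left this h4
  have hsum0 : Summable fun k => g k w := by
    refine Summable.of_norm_bounded (hWsum.mul_left M') fun k => ?_
    have h1 : ‖g k w‖ = ‖poch a k‖ * ‖ipochL b c y k‖ * ‖w‖ ^ k / (k.factorial : ℝ) := by
      simp [hg, norm_mul, norm_div, norm_pow]
    rw [h1]
    calc ‖poch a k‖ * ‖ipochL b c y k‖ * ‖w‖ ^ k / (k.factorial : ℝ)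
        ≤ ‖poch a k‖ * M' * (((k:ℝ) + 1) * r ^ k) / (k.factorial : ℝ) := by
          gcongr
          · exact hL k
          · calc ‖w‖ ^ k ≤ r ^ k := pow_le_pow_left₀ (norm_nonneg w) hwr.le _
              _ ≤ ((k:ℝ) + 1) * r ^ k := by nlinarith [pow_pos hr0 k, (Nat.cast_nonneg k : (0:ℝ) ≤ k)]
      _ = M' * (‖poch a k‖ * ((k:ℝ) + 1) * r ^ k / (k.factorial : ℝ)) := by ring
      _ ≤ M' * W k := mul_le_mul_of_nonneg_left (hWle k) hM'0
  have Hd : HasDerivAt (fun z : ℂ => ∑' k, g k z) (∑' k, g' k w) w := by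
    refine hasDerivAt_tsum_of_isPreconnected ((hWsum.mul_left (M' / r)))
      isOpen_ball (convex_ball (0:ℂ) r).isPreconnected
      (fun k z _ => hgd k z) hbound (mem_ball_zero_iff.mpr hwr) hsum0 (mem_ball_zero_iff.mpr hwr)
  suffices hsv : (∑' k, g' k w) = a * b / c * inc2F1L (a + 1) (b + 1) (c + 1) y w by
    rw [← hsv]; exact Hd
  have hsum' : Summable fun k => g' k w :=
    Summable.of_norm_bounded (hWsum.mul_left (M' / r))
      (fun k => hbound k w (mem_ball_zero_iff.mpr hwr))
  rw [Summable.tsum_eq_zero_add hsum']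
  have h0 : g' 0 w = 0 := by simp [hg']
  rw [h0, zero_add]
  have hc0 : c ≠ 0 := fun h => by
    have := lt_trans hb hbc; simp [h] at this
  have hterm : ∀ k : ℕ, g' (k + 1) w =
      a * b / c * (poch (a + 1) k * ipochL (b + 1) (c + 1) y k * w ^ k / (k.factorial : ℂ)) := by
    intro k
    simp only [hg']
    rw [poch_succ', ipochL_shift hb hbc]
    have e2 : (k + 1 : ℕ) - 1 = k := rfl
    rw [e2, Nat.factorial_succ]
    have e1 : ((k : ℂ) + 1) ≠ 0 := by
      exact_mod_cast (Nat.cast_ne_zero (R := ℂ)).mpr (Nat.succ_ne_zero k)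
    have hkf : ((k.factorial : ℂ)) ≠ 0 := by exact_mod_cast k.factorial_ne_zero
    push_cast
    field_simp
  calc (∑' k, g' (k + 1) w)
      = ∑' k, a * b / c * (poch (a + 1) k * ipochL (b + 1) (c + 1) y k * w ^ k /
          (k.factorial : ℂ)) := tsum_congr hterm
    _ = a * b / c * inc2F1L (a + 1) (b + 1) (c + 1) y w := by
        rw [tsum_mul_left, inc2F1L]

open Filter in
lemma iteratedDeriv_congr_nhds {f g : ℂ → ℂ} {x : ℂ} (n : ℕ) (h : f =ᶠ[nhds x] g) :
    iteratedDeriv n f x = iteratedDeriv n g x := by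
  induction n generalizing f g with
  | zero => simpa using h.self_of_nhds
  | succ n ih => rw [iteratedDeriv_succ', iteratedDeriv_succ']; exact ih h.deriv

open Filter Metric in
lemma main_aux (y : ℝ) (hy0 : 0 ≤ y) (hy1 : y < 1) :
    ∀ n : ℕ, ∀ (a b c C x : ℂ), 0 < b.re → b.re < c.re → ‖x‖ < 1 →
      iteratedDeriv n (fun w : ℂ => C * inc2F1L a b c y w) x =
        C * (poch a n * poch b n / poch c n) * inc2F1L (a + n) (b + n) (c + n) y x := by
  intro n
  induction n with
  | zero =>
    intro a b c C x hb hbc hx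
    simp [poch_zero]
  | succ n ih =>
    intro a b c C x hb hbc hx
    rw [iteratedDeriv_succ']
    have hev : ∀ᶠ w in nhds x, ‖w‖ < 1 := by
      have : Metric.ball (0:ℂ) 1 ∈ nhds x := by
        exact Metric.isOpen_ball.mem_nhds (mem_ball_zero_iff.mpr hx)
      filter_upwards [this] with w hw
      exact mem_ball_zero_iff.mp hw
    have hderiv_eq : (deriv fun w : ℂ => C * inc2F1L a b c y w) =ᶠ[nhds x]
        fun w : ℂ => (C * (a * b / c)) * inc2F1L (a + 1) (b + 1) (c + 1) y w := by
      filter_upwards [hev] with w hw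
      have hd := (inc2F1L_hasDerivAt a hb hbc hy0 hy1 hw).const_mul C
      rw [hd.deriv]
      ring
    rw [iteratedDeriv_congr_nhds n hderiv_eq]
    have hb1 : 0 < (b + 1).re := by simp [add_re]; linarith
    have hbc1 : (b + 1).re < (c + 1).re := by simp [add_re]; linarith
    rw [ih (a + 1) (b + 1) (c + 1) (C * (a * b / c)) x hb1 hbc1 hx]
    have ea : a + 1 + (n : ℂ) = a + ((n + 1 : ℕ) : ℂ) := by push_cast; ring
    have eb : b + 1 + (n : ℂ) = b + ((n + 1 : ℕ) : ℂ) := by push_cast; ring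
    have ec : c + 1 + (n : ℂ) = c + ((n + 1 : ℕ) : ℂ) := by push_cast; ring
    rw [ea, eb, ec, poch_succ' a n, poch_succ' b n, poch_succ' c n]
    have hc0 : c ≠ 0 := fun h => by have := lt_trans hb hbc; simp [h] at this
    have hcp : poch (c + 1) n ≠ 0 := poch_ne_zero (by simp [add_re]; linarith [lt_trans hb hbc]) n
    field_simp

theorem stmt11 (a b c : ℂ) (y : ℝ) (x : ℂ) (n : ℕ)
    (hb : 0 < b.re) (hbc : b.re < c.re) (hy0 : 0 ≤ y) (hy1 : y < 1)
    (hx : ‖x‖ < 1) :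
    iteratedDeriv n (fun w : ℂ => inc2F1L a b c y w) x =
      (poch a n * poch b n / poch c n) * inc2F1L (a + n) (b + n) (c + n) y x := by
  have h1 : (fun w : ℂ => inc2F1L a b c y w) = fun w : ℂ => (1:ℂ) * inc2F1L a b c y w := by
    funext w; rw [one_mul]
  rw [h1, main_aux y hy0 hy1 n a b c 1 x hb hbc hx, one_mul]
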